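/- Let γ: I → M be a slant non-geodesic curve with null normal in a 3-dimensional normal almost paracontact metric manifold, with η(γ̇) = c constant and c² ≠ 1. Then α∘γ = ± g(N, φγ̇)/(1 − c²) ≠ 0, and the Cartan data of γ satisfy N = −α(ξ − cγ̇ ± φγ̇), κ = α′/α ± β + αc, and W = (−1/(2α(1 − c²)))(ξ − cγ̇ ∓ φγ̇), where α, β denote the compositions with γ of 2α = Trace{X ↦ ∇_X ξ}, 2β = Trace{X ↦ φ∇_X ξ}, and α′ is the derivative of α∘γ. -/

import Mathlib

/-- The data, along a curve `γ : I → M`, of a 3-dimensional almost paracontact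
metric manifold `(M, φ, ξ, η, g)`: the pullback tangent bundle is trivialized
over a real vector space `V`; `g t`, `phi t`, `xi t` are the metric, the
structure tensor and the Reeb field at the point `γ t`, and `T t = γ̇(t)` is
the velocity of the curve.  The 1-form `η` is recovered as `η(v) = g v ξ`.
The axioms record: `η(ξ) = 1`, `φξ = 0`, `φ² = Id − η ⊗ ξ`,
`g(φv, φw) = −g(v,w) + η(v)η(w)`, symmetry of `g`, and that `g` has
signature `(2,1)` (an orthonormal basis with signs `(+,+,−)`). -/
structure APCMCurve (V : Type*) [AddCommGroup V] [Module ℝ V] where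
  g : ℝ → V →ₗ[ℝ] V →ₗ[ℝ] ℝ
  phi : ℝ → V →ₗ[ℝ] V
  xi : ℝ → V
  T : ℝ → V
  g_symm : ∀ t v w, g t v w = g t w v
  xi_unit : ∀ t, g t (xi t) (xi t) = 1
  phi_xi : ∀ t, phi t (xi t) = 0
  phi_sq : ∀ t v, phi t (phi t v) = v - g t v (xi t) • xi t
  compat : ∀ t v w, g t (phi t v) (phi t w) = -(g t v w) + g t v (xi t) * g t w (xi t)
  signature : ∀ t, ∃ e : Module.Basis (Fin 3) ℝ V,
    g t (e 0) (e 0) = 1 ∧ g t (e 1) (e 1) = 1 ∧ g t (e 2) (e 2) = -1 ∧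
    g t (e 0) (e 1) = 0 ∧ g t (e 0) (e 2) = 0 ∧ g t (e 1) (e 2) = 0

/-- The data, along a curve `γ`, of a 3-dimensional *normal* almost paracontact
metric manifold: in addition to `APCMCurve`, `D` is the covariant derivative
along `γ` (induced by the Levi-Civita connection `∇` of `g`), and
`a = α ∘ γ`, `b = β ∘ γ` are the compositions with `γ` of the structure
functions `α`, `β` of the normal structure (those with
`2α = Trace{X ↦ ∇_X ξ}`, `2β = Trace{X ↦ φ∇_X ξ}`), so that along `γ` one has
`∇_{γ̇} ξ = α(γ̇ − η(γ̇)ξ) + βφγ̇` (field `D_xi`) and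
`(∇_{γ̇} φ)A = β(g(γ̇,A)ξ − η(A)γ̇) + α(g(φγ̇,A)ξ − η(A)φγ̇)` for every vector
field `A` along `γ` (field `D_phi`).  `D` is additive, satisfies the Leibniz
rule and is metric-compatible. -/
structure NAPCMCurve (V : Type*) [AddCommGroup V] [Module ℝ V]
    extends APCMCurve V where
  D : (ℝ → V) → (ℝ → V)
  a : ℝ → ℝ
  b : ℝ → ℝ
  D_add : ∀ A B : ℝ → V, D (fun t => A t + B t) = fun t => D A t + D B t
  D_smul : ∀ (f : ℝ → ℝ) (A : ℝ → V) (t : ℝ), DifferentiableAt ℝ f t →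
    D (fun s => f s • A s) t = deriv f t • A t + f t • D A t
  D_metric : ∀ (A B : ℝ → V) (t : ℝ),
    HasDerivAt (fun s => g s (A s) (B s)) (g t (D A t) (B t) + g t (A t) (D B t)) t
  D_xi : ∀ t, D xi t = a t • (T t - g t (T t) (xi t) • xi t) + b t • phi t (T t)
  D_phi : ∀ (A : ℝ → V) (t : ℝ),
    D (fun s => phi s (A s)) t
      = b t • (g t (T t) (A t) • xi t - g t (A t) (xi t) • T t)
        + a t • (g t (phi t (T t)) (A t) • xi t - g t (A t) (xi t) • phi t (T t))
        + phi t (D A t)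

set_option linter.unusedSectionVars false

namespace APCMCurve
variable {V : Type*} [AddCommGroup V] [Module ℝ V] (M : APCMCurve V) (t : ℝ)

lemma eta_phi (v : V) : M.g t (M.phi t v) (M.xi t) = 0 := by
  have h1 := M.compat t (M.phi t v) (M.phi t v)
  rw [M.phi_sq t v] at h1
  have h2 := M.compat t v v
  simp only [map_sub, map_smul, LinearMap.sub_apply, LinearMap.smul_apply, smul_eq_mul,
    M.xi_unit t, M.g_symm t (M.xi t) v] at h1
  nlinarith [h1, h2]

lemma antisym (v w : V) : M.g t (M.phi t v) w = -(M.g t v (M.phi t w)) := by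
  have h1 := M.compat t v (M.phi t w)
  rw [M.phi_sq t w, M.eta_phi t w] at h1
  simp only [map_sub, map_smul, smul_eq_mul, M.eta_phi t v, mul_zero] at h1
  linarith

lemma gTphiT : M.g t (M.T t) (M.phi t (M.T t)) = 0 := by
  have h := M.antisym t (M.T t) (M.T t)
  rw [M.g_symm t (M.phi t (M.T t)) (M.T t)] at h
  linarith

lemma nondeg (v : V) (h : ∀ w, M.g t v w = 0) : v = 0 := by
  obtain ⟨e, h00, h11, h22, h01, h02, h12⟩ := M.signature t
  have hv := e.sum_repr v
  rw [Fin.sum_univ_three] at hv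
  have h0 := h (e 0); have h1 := h (e 1); have h2 := h (e 2)
  rw [← hv] at h0 h1 h2
  simp only [map_add, map_smul, LinearMap.add_apply, LinearMap.smul_apply, smul_eq_mul,
    h00, h11, h22, h01, h02, h12, M.g_symm t (e 1) (e 0), M.g_symm t (e 2) (e 0),
    M.g_symm t (e 2) (e 1)] at h0 h1 h2
  rw [← hv]
  have e0 : e.repr v 0 = 0 := by linarith
  have e1 : e.repr v 1 = 0 := by linarith
  have e2 : e.repr v 2 = 0 := by linarith
  rw [e0, e1, e2]; simp


variable (c : ℝ)

lemma orth3 (hc : 1 - c^2 ≠ 0)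
    (hT : M.g t (M.T t) (M.T t) = 1) (hsl : M.g t (M.T t) (M.xi t) = c)
    (v : V) (h1 : M.g t v (M.T t) = 0) (h2 : M.g t v (M.xi t) = 0)
    (h3 : M.g t v (M.phi t (M.T t)) = 0) : v = 0 := by
  obtain ⟨e, -⟩ := M.signature t
  haveI : Module.Finite ℝ V := Module.Finite.of_basis e
  have hrank : Module.finrank ℝ V = 3 := by
    rw [Module.finrank_eq_card_basis e]; simp
  set F : Fin 3 → V := ![M.T t, M.xi t - c • M.T t, M.phi t (M.T t)] with hF
  have gXT : M.g t (M.xi t - c • M.T t) (M.T t) = 0 := by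
    simp only [map_sub, map_smul, LinearMap.sub_apply, LinearMap.smul_apply, smul_eq_mul,
      hT, M.g_symm t (M.xi t) (M.T t), hsl]
    ring
  have gPT : M.g t (M.phi t (M.T t)) (M.T t) = 0 := by
    rw [M.g_symm]; exact M.gTphiT t
  have gXX : M.g t (M.xi t - c • M.T t) (M.xi t - c • M.T t) = 1 - c^2 := by
    simp only [map_sub, map_smul, LinearMap.sub_apply, LinearMap.smul_apply, smul_eq_mul,
      hT, M.xi_unit t, M.g_symm t (M.xi t) (M.T t), hsl]
    ring
  have gPX : M.g t (M.phi t (M.T t)) (M.xi t - c • M.T t) = 0 := by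
    simp only [map_sub, map_smul, smul_eq_mul, M.eta_phi t (M.T t), gPT]
    ring
  have gPP : M.g t (M.phi t (M.T t)) (M.phi t (M.T t)) = -(1 - c^2) := by
    rw [M.compat t (M.T t) (M.T t), hT, hsl]; ring
  have hli : LinearIndependent ℝ F := by
    rw [Fintype.linearIndependent_iff]
    intro r hr
    have hrT := congrArg (fun w => M.g t w (M.T t)) hr
    have hrX := congrArg (fun w => M.g t w (M.xi t - c • M.T t)) hr
    have hrP := congrArg (fun w => M.g t w (M.phi t (M.T t))) hr
    simp only [Fin.sum_univ_three, hF, Matrix.cons_val_zero, Matrix.cons_val_one,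
      Matrix.head_cons, Matrix.cons_val_two, Matrix.tail_cons, map_add, map_smul,
      LinearMap.add_apply, LinearMap.smul_apply, smul_eq_mul, map_zero, LinearMap.zero_apply,
      hT, gXT, gPT, gXX, gPX, gPP, M.g_symm t (M.T t) (M.xi t - c • M.T t),
      M.g_symm t (M.xi t - c • M.T t) (M.phi t (M.T t)), M.gTphiT t] at hrT hrX hrP
    have r0 : r 0 = 0 := by linarith
    have r1 : r 1 = 0 := by
      have : r 1 * (1 - c^2) = 0 := by linarith
      rcases mul_eq_zero.mp this with h | h
      · exact h
      · exact absurd h hc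
    have r2 : r 2 = 0 := by
      have : r 2 * (1 - c^2) = 0 := by linarith
      rcases mul_eq_zero.mp this with h | h
      · exact h
      · exact absurd h hc
    intro i; fin_cases i <;> assumption
  have hcard : Fintype.card (Fin 3) = Module.finrank ℝ V := by rw [hrank]; simp
  set b := basisOfLinearIndependentOfCardEqFinrank hli hcard with hb
  have hbcoe : ⇑b = F := coe_basisOfLinearIndependentOfCardEqFinrank hli hcard
  apply M.nondeg t
  intro w
  have hw := b.sum_repr w
  rw [Fin.sum_univ_three] at hw
  rw [← hw]
  simp only [map_add, map_smul, smul_eq_mul, hbcoe, hF, Matrix.cons_val_zero,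
    Matrix.cons_val_one, Matrix.head_cons, Matrix.cons_val_two, Matrix.tail_cons]
  have hvX : M.g t v (M.xi t - c • M.T t) = 0 := by
    simp only [map_sub, map_smul, smul_eq_mul, h1, h2]; ring
  rw [h1, h3, hvX]; ring

lemma decompT (hc : 1 - c^2 ≠ 0)
    (hT : M.g t (M.T t) (M.T t) = 1) (hsl : M.g t (M.T t) (M.xi t) = c)
    (v : V) (h1 : M.g t v (M.T t) = 0) :
    v = (M.g t v (M.xi t) / (1 - c^2)) • (M.xi t - c • M.T t)
      + (M.g t v (M.phi t (M.T t)) / (c^2 - 1)) • M.phi t (M.T t) := by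
  have gXT : M.g t (M.xi t - c • M.T t) (M.T t) = 0 := by
    simp only [map_sub, map_smul, LinearMap.sub_apply, LinearMap.smul_apply, smul_eq_mul,
      hT, M.g_symm t (M.xi t) (M.T t), hsl]
    ring
  have gPT : M.g t (M.phi t (M.T t)) (M.T t) = 0 := by
    rw [M.g_symm]; exact M.gTphiT t
  have gXxi : M.g t (M.xi t - c • M.T t) (M.xi t) = 1 - c^2 := by
    simp only [map_sub, map_smul, LinearMap.sub_apply, LinearMap.smul_apply, smul_eq_mul,
      M.xi_unit t, hsl]
    ring
  have gPxi : M.g t (M.phi t (M.T t)) (M.xi t) = 0 := M.eta_phi t (M.T t)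
  have gXP : M.g t (M.xi t - c • M.T t) (M.phi t (M.T t)) = 0 := by
    simp only [map_sub, map_smul, LinearMap.sub_apply, LinearMap.smul_apply, smul_eq_mul,
      M.g_symm t (M.xi t) (M.phi t (M.T t)), M.eta_phi t (M.T t), M.gTphiT t]
    ring
  have gPP : M.g t (M.phi t (M.T t)) (M.phi t (M.T t)) = c^2 - 1 := by
    rw [M.compat t (M.T t) (M.T t), hT, hsl]; ring
  have hc' : c^2 - 1 ≠ 0 := fun h => hc (by linarith)
  have hc'' : (-1 : ℝ) + c^2 ≠ 0 := fun h => hc (by linarith)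
  rw [← sub_eq_zero]
  apply M.orth3 t c hc hT hsl <;>
  · simp only [map_sub, map_add, map_smul, LinearMap.sub_apply, LinearMap.add_apply,
      LinearMap.smul_apply, smul_eq_mul, h1, gXT, gPT, gXxi, gPxi, gXP, gPP,
      M.xi_unit t, hsl, hT, M.g_symm t (M.xi t) (M.T t),
      M.g_symm t (M.xi t) ((M.phi t) (M.T t)), M.eta_phi t (M.T t), M.gTphiT t]
    try field_simp
    try ring


section pairings
variable (hT : M.g t (M.T t) (M.T t) = 1) (hsl : M.g t (M.T t) (M.xi t) = c)
include hT hsl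

lemma pXT : M.g t (M.xi t - c • M.T t) (M.T t) = 0 := by
  simp only [map_sub, map_smul, LinearMap.sub_apply, LinearMap.smul_apply, smul_eq_mul,
    hT, M.g_symm t (M.xi t) (M.T t), hsl]; ring

lemma pTX : M.g t (M.T t) (M.xi t - c • M.T t) = 0 := by
  rw [M.g_symm]; exact M.pXT t c hT hsl

lemma pPT : M.g t (M.phi t (M.T t)) (M.T t) = 0 := by
  rw [M.g_symm]; exact M.gTphiT t

lemma pXX : M.g t (M.xi t - c • M.T t) (M.xi t - c • M.T t) = 1 - c^2 := by
  simp only [map_sub, map_smul, LinearMap.sub_apply, LinearMap.smul_apply, smul_eq_mul,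
    hT, M.xi_unit t, M.g_symm t (M.xi t) (M.T t), hsl]; ring

lemma pXxi : M.g t (M.xi t - c • M.T t) (M.xi t) = 1 - c^2 := by
  simp only [map_sub, map_smul, LinearMap.sub_apply, LinearMap.smul_apply, smul_eq_mul,
    M.xi_unit t, hsl]; ring

lemma pPX : M.g t (M.phi t (M.T t)) (M.xi t - c • M.T t) = 0 := by
  simp only [map_sub, map_smul, smul_eq_mul, M.eta_phi t (M.T t), M.pPT t c hT hsl]; ring

lemma pXP : M.g t (M.xi t - c • M.T t) (M.phi t (M.T t)) = 0 := by
  rw [M.g_symm]; exact M.pPX t c hT hsl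

lemma pPP : M.g t (M.phi t (M.T t)) (M.phi t (M.T t)) = c^2 - 1 := by
  rw [M.compat t (M.T t) (M.T t), hT, hsl]; ring

end pairings

end APCMCurve

/-- Let `γ` be a slant non-geodesic curve with null normal
(`g(γ̇,γ̇) = 1`, `∇_{γ̇}γ̇ ≠ 0`, `g(∇_{γ̇}γ̇,∇_{γ̇}γ̇) = 0`) in a 3-dimensional
normal almost paracontact metric manifold, with `η(γ̇) = c` constant, `c² ≠ 1`.
With the Cartan data `T = γ̇`, `N = ∇_{γ̇}T`, `κ` with `∇_{γ̇}N = κN`, and `W`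
the field with `g(N,W) = 1`, `g(W,W) = g(T,W) = 0`, one has
`α = ±g(N,φγ̇)/(1−c²) ≠ 0`, `N = −α(ξ − cγ̇ ± φγ̇)`, `κ = α′/α ± β + αc` and
`W = (−1/(2α(1−c²)))(ξ − cγ̇ ∓ φγ̇)`. -/
theorem slant_null_normal_cartan {V : Type*} [AddCommGroup V] [Module ℝ V]
    (M : NAPCMCurve V) (c : ℝ) (hc : c ^ 2 ≠ 1)
    (hunit : ∀ t, M.g t (M.T t) (M.T t) = 1)
    (hslant : ∀ t, M.g t (M.T t) (M.xi t) = c)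
    (hnongeo : ∀ t, M.D M.T t ≠ 0)
    (hnullnormal : ∀ t, M.g t (M.D M.T t) (M.D M.T t) = 0)
    (hadiff : Differentiable ℝ M.a)
    (N : ℝ → V) (hN : N = M.D M.T)
    (κ : ℝ → ℝ) (hκ : ∀ t, M.D N t = κ t • N t)
    (W : ℝ → V)
    (hW1 : ∀ t, M.g t (N t) (W t) = 1)
    (hW2 : ∀ t, M.g t (W t) (W t) = 0)
    (hW3 : ∀ t, M.g t (M.T t) (W t) = 0) :
    ∀ t : ℝ, M.a t ≠ 0 ∧ ∃ s : ℝ, (s = 1 ∨ s = -1) ∧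
      M.a t = s * (M.g t (N t) (M.phi t (M.T t)) / (1 - c ^ 2)) ∧
      N t = (-(M.a t)) • (M.xi t - c • M.T t + s • M.phi t (M.T t)) ∧
      κ t = deriv M.a t / M.a t + s * M.b t + M.a t * c ∧
      W t = (-1 / (2 * M.a t * (1 - c ^ 2)))
          • (M.xi t - c • M.T t - s • M.phi t (M.T t)) := by
  have hc1 : (1:ℝ) - c^2 ≠ 0 := fun h => hc (by linarith)
  have hc2 : c^2 - 1 ≠ 0 := fun h => hc (by linarith)
  subst hN
  -- g(N, T) = 0
  have hNT : ∀ u, M.g u (M.D M.T u) (M.T u) = 0 := by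
    intro u
    have h := M.D_metric M.T M.T u
    rw [show (fun s => M.g s (M.T s) (M.T s)) = fun _ : ℝ => (1:ℝ) from funext hunit] at h
    have h0 := h.unique (hasDerivAt_const u 1)
    have hs := M.g_symm u (M.T u) (M.D M.T u)
    linarith
  -- g(T, Dξ) = a (1 - c²)
  have hTDxi : ∀ u, M.g u (M.T u) (M.D M.xi u) = M.a u * (1 - c^2) := by
    intro u
    rw [M.D_xi u]
    simp only [map_add, map_sub, map_smul, smul_eq_mul, hslant u, hunit u,
      M.toAPCMCurve.gTphiT u]
    ring
  -- g(N, ξ) = -a(1-c²)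
  have hNxi : ∀ u, M.g u (M.D M.T u) (M.xi u) = -(M.a u * (1 - c^2)) := by
    intro u
    have h := M.D_metric M.T M.xi u
    rw [show (fun s => M.g s (M.T s) (M.xi s)) = fun _ : ℝ => c from funext hslant] at h
    have h0 := h.unique (hasDerivAt_const u c)
    have := hTDxi u
    linarith
  set q : ℝ → ℝ := fun u => M.g u (M.D M.T u) (M.phi u (M.T u)) / (c^2 - 1) with hqdef
  have hgNP : ∀ u, M.g u (M.D M.T u) (M.phi u (M.T u)) = q u * (c^2 - 1) := by
    intro u; rw [hqdef]; field_simp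
  have hNdec : ∀ u, M.D M.T u
      = (-(M.a u)) • (M.xi u - c • M.T u) + q u • M.phi u (M.T u) := by
    intro u
    have h := M.toAPCMCurve.decompT u c hc1 (hunit u) (hslant u) (M.D M.T u) (hNT u)
    rw [hNxi u] at h
    have hcoef : -(M.a u * (1-c^2))/(1-c^2) = -(M.a u) := by field_simp
    rw [hcoef] at h
    rw [h, hqdef]
  -- q² = a²
  have hq2 : ∀ u, q u ^ 2 = M.a u ^ 2 := by
    intro u
    have h := hnullnormal u
    rw [hNdec u] at h
    simp only [map_add, map_smul, map_neg, LinearMap.add_apply, LinearMap.smul_apply,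
      LinearMap.neg_apply, smul_eq_mul,
      M.toAPCMCurve.pXX u c (hunit u) (hslant u),
      M.toAPCMCurve.pXP u c (hunit u) (hslant u),
      M.toAPCMCurve.pPX u c (hunit u) (hslant u),
      M.toAPCMCurve.pPP u c (hunit u) (hslant u)] at h
    have h2 : (M.a u ^ 2 - q u ^ 2) * (1 - c ^ 2) = 0 := by nlinarith [h]
    rcases mul_eq_zero.mp h2 with h3 | h3
    · linarith
    · exact absurd h3 hc1
  have ha : ∀ u, M.a u ≠ 0 := by
    intro u h0
    apply hnongeo u
    have hq0 : q u = 0 := by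
      have := hq2 u; rw [h0] at this
      have : q u ^ 2 = 0 := by rw [this]; ring
      exact pow_eq_zero_iff (by norm_num) |>.mp this
    rw [hNdec u, h0, hq0]
    simp
  -- the sign function is constant
  have hqdiff : Differentiable ℝ q := by
    rw [hqdef]
    exact Differentiable.div_const
      (fun u => (M.D_metric (M.D M.T) (fun s => M.phi s (M.T s)) u).differentiableAt) _
  set sf : ℝ → ℝ := fun u => -(q u) / M.a u with hsfdef
  have hsf2 : ∀ u, sf u ^ 2 = 1 := by
    intro u
    rw [hsfdef]
    simp only []
    rw [div_pow, neg_pow]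
    field_simp [ha u]
    nlinarith [hq2 u]
  have hsfdiff : Differentiable ℝ sf := (hqdiff.neg).div hadiff ha
  have hsfderiv : ∀ u, deriv sf u = 0 := by
    intro u
    have h1 : HasDerivAt (fun x => sf x ^ 2) (2 * sf u ^ (2-1) * deriv sf u) u :=
      ((hsfdiff u).hasDerivAt).pow 2
    rw [show (fun x => sf x ^ 2) = fun _ : ℝ => (1:ℝ) from funext hsf2] at h1
    have h0 := h1.unique (hasDerivAt_const u 1)
    have hsne : sf u ≠ 0 := by
      intro hh; have := hsf2 u; rw [hh] at this; norm_num at this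
    have : 2 * sf u * deriv sf u = 0 := by rw [← h0]; ring
    rcases mul_eq_zero.mp this with h3 | h3
    · rcases mul_eq_zero.mp h3 with h4 | h4
      · norm_num at h4
      · exact absurd h4 hsne
    · exact h3
  have hconst : ∀ u v : ℝ, sf u = sf v := is_const_of_deriv_eq_zero hsfdiff hsfderiv
  have hqs : ∀ u, q u = -(M.a u) * sf u := by
    intro u
    rw [hsfdef]
    field_simp
    rw [mul_div_cancel_right₀ _ (ha u)]
  -- now work at a fixed t
  intro t
  obtain ⟨s₀, hs0def⟩ : ∃ x : ℝ, x = sf t := ⟨sf t, rfl⟩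
  have hs0sq : s₀ ^ 2 = 1 := by rw [hs0def]; exact hsf2 t
  have hs01 : s₀ = 1 ∨ s₀ = -1 := by
    rcases mul_eq_zero.mp (show (s₀ - 1) * (s₀ + 1) = 0 by nlinarith [hs0sq]) with h3 | h3
    · left; linarith
    · right; linarith
  have hqs0 : ∀ u, q u = -(M.a u) * s₀ := by
    intro u; rw [hqs u, hconst u t, hs0def]
  set A : ℝ → V := fun u => M.xi u + (-c) • M.T u + s₀ • M.phi u (M.T u) with hAdef
  have hNfun : M.D M.T = fun u => (-(M.a u)) • A u := by
    funext u
    rw [hNdec u, hqs0 u, hAdef]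
    module
  have hNA : M.D M.T t = (-(M.a t)) • A t := by rw [hNfun]
  have hphiA : M.phi t (A t) = (-c) • M.phi t (M.T t) + s₀ • (M.T t - c • M.xi t) := by
    rw [hAdef]
    simp only [map_add, map_smul, M.phi_xi t, M.phi_sq t (M.T t), hslant t]
    module
  have hAne : A t ≠ 0 := by
    intro h0
    apply hnongeo t
    rw [hNA, h0, smul_zero]
  have hDNval : M.D (M.D M.T) t
      = (-(deriv M.a t) - M.a t * (M.a t * c + s₀ * M.b t)) • A t := by
    conv_lhs => rw [hNfun]
    have h1 : M.D (fun u => (-(M.a u)) • A u) t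
        = deriv (fun u => -(M.a u)) t • A t + (-(M.a t)) • M.D A t :=
      M.D_smul (fun u => -(M.a u)) A t (hadiff t).neg
    rw [h1, deriv.fun_neg]
    have h2 : M.D A t = M.D (fun u => M.xi u + (-c) • M.T u) t
        + M.D (fun u => s₀ • M.phi u (M.T u)) t := by
      rw [hAdef]; exact congrFun (M.D_add _ _) t
    have h3 : M.D (fun u => M.xi u + (-c) • M.T u) t
        = M.D M.xi t + M.D (fun u => (-c) • M.T u) t := congrFun (M.D_add _ _) t
    have h4 : M.D (fun u => (-c) • M.T u) t = (-c) • M.D M.T t := by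
      have h := M.D_smul (fun _ => -c) M.T t (differentiableAt_const _)
      rw [deriv_const] at h
      simpa using h
    have h5 : M.D (fun u => s₀ • M.phi u (M.T u)) t
        = s₀ • M.D (fun u => M.phi u (M.T u)) t := by
      have h := M.D_smul (fun _ => s₀) (fun u => M.phi u (M.T u)) t (differentiableAt_const _)
      rw [deriv_const] at h
      simpa using h
    have h6 := M.D_phi M.T t
    rw [hunit t, hslant t, M.toAPCMCurve.pPT t c (hunit t) (hslant t)] at h6
    have h7 := M.D_xi t
    rw [hslant t] at h7
    have h8 : M.phi t (M.D M.T t) = (-(M.a t)) • M.phi t (A t) := by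
      rw [hNA]; exact map_smul (M.phi t) _ _
    rw [h2, h3, h4, h5, h6, h7, h8, hphiA, hNA, hAdef]
    rcases hs01 with h | h <;> rw [h] <;> module
  have hDN := hκ t
  rw [hDNval, hNA, smul_smul] at hDN
  have hscal : (-(deriv M.a t) - M.a t * (M.a t * c + s₀ * M.b t)) = κ t * (-(M.a t)) := by
    have h0 : ((-(deriv M.a t) - M.a t * (M.a t * c + s₀ * M.b t)) - κ t * (-(M.a t))) • A t
        = 0 := by rw [sub_smul, hDN, sub_self]
    rcases smul_eq_zero.mp h0 with h | h
    · linarith [sub_eq_zero.mp h]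
    · exact absurd h hAne
  refine ⟨ha t, s₀, hs01, ?_, ?_, ?_, ?_⟩
  · -- a = s * g(N, φT)/(1-c²)
    rw [hgNP t, hqs0 t]
    rcases hs01 with h | h <;> rw [h] <;> field_simp <;> ring
  · -- N = -a(ξ - cT + sP)
    rw [hNdec t, hqs0 t]
    module
  · -- κ
    field_simp [ha t]
    first
    | linear_combination 2 * hscal
    | linear_combination -hscal
    | linear_combination hscal
    | linear_combination -2 * hscal
  · -- W
    have hWd := M.toAPCMCurve.decompT t c hc1 (hunit t) (hslant t) (W t)
      (by rw [M.g_symm]; exact hW3 t)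
    obtain ⟨u0, hu0def⟩ : ∃ x : ℝ, x = M.g t (W t) (M.xi t) / (1 - c^2) := ⟨_, rfl⟩
    obtain ⟨v0, hv0def⟩ : ∃ x : ℝ, x = M.g t (W t) (M.phi t (M.T t)) / (c^2 - 1) := ⟨_, rfl⟩
    rw [← hu0def, ← hv0def] at hWd
    have hWW := hW2 t
    rw [hWd] at hWW
    simp only [map_add, map_smul, LinearMap.add_apply, LinearMap.smul_apply, smul_eq_mul,
      M.toAPCMCurve.pXX t c (hunit t) (hslant t),
      M.toAPCMCurve.pXP t c (hunit t) (hslant t),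
      M.toAPCMCurve.pPX t c (hunit t) (hslant t),
      M.toAPCMCurve.pPP t c (hunit t) (hslant t)] at hWW
    have hNW := hW1 t
    rw [hNdec t, hqs0 t, hWd] at hNW
    simp only [map_add, map_smul, map_neg, LinearMap.add_apply, LinearMap.smul_apply,
      LinearMap.neg_apply, smul_eq_mul,
      M.toAPCMCurve.pXX t c (hunit t) (hslant t),
      M.toAPCMCurve.pXP t c (hunit t) (hslant t),
      M.toAPCMCurve.pPX t c (hunit t) (hslant t),
      M.toAPCMCurve.pPP t c (hunit t) (hslant t)] at hNW
    rw [hWd]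
    rcases hs01 with h | h <;> rw [h] at hNW ⊢
    · -- s₀ = 1 : show v0 = -u0, u0 = -1/(2a(1-c²))
      have h9 : (u0 ^ 2 - v0 ^ 2) * (1 - c ^ 2) = 0 := by linear_combination hWW
      have h10 : u0 ^ 2 - v0 ^ 2 = 0 := by
        rcases mul_eq_zero.mp h9 with h10 | h10
        · exact h10
        · exact absurd h10 hc1
      have hcase : (v0 - u0) * (v0 + u0) = 0 := by linear_combination -h10
      rcases mul_eq_zero.mp hcase with h3 | h3
      · exfalso
        have hv : v0 = u0 := by linarith
        rw [hv] at hNW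
        exact one_ne_zero (by linear_combination -hNW : (1:ℝ) = 0)
      · have hv : v0 = -u0 := by linarith
        have hD : 2 * M.a t * (1 - c^2) ≠ 0 := mul_ne_zero (mul_ne_zero two_ne_zero (ha t)) hc1
        have hu : u0 = -1 / (2 * M.a t * (1 - c^2)) := by
          rw [hv] at hNW
          rw [eq_div_iff hD]
          linear_combination -hNW
        rw [hv, hu]
        module
    · -- s₀ = -1
      have h9 : (u0 ^ 2 - v0 ^ 2) * (1 - c ^ 2) = 0 := by linear_combination hWW
      have h10 : u0 ^ 2 - v0 ^ 2 = 0 := by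
        rcases mul_eq_zero.mp h9 with h10 | h10
        · exact h10
        · exact absurd h10 hc1
      have hcase : (v0 - u0) * (v0 + u0) = 0 := by linear_combination -h10
      rcases mul_eq_zero.mp hcase with h3 | h3
      · have hv : v0 = u0 := by linarith
        have hD : 2 * M.a t * (1 - c^2) ≠ 0 := mul_ne_zero (mul_ne_zero two_ne_zero (ha t)) hc1
        have hu : u0 = -1 / (2 * M.a t * (1 - c^2)) := by
          rw [hv] at hNW
          rw [eq_div_iff hD]
          linear_combination -hNW
        rw [hv, hu]
        module
      · exfalso
        have hv : v0 = -u0 := by linarith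
        rw [hv] at hNW
        exact one_ne_zero (by linear_combination -hNW : (1:ℝ) = 0)
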